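/- Let f : ℝⁿ → ℝ be twice continuously differentiable and σ-strongly convex for some σ > 0 (i.e. f(y) ≥ f(x) + ⟨∇f(x), y − x⟩ + (σ/2)‖y − x‖² for all x, y ∈ ℝⁿ), with each partial derivative uniformly Lipschitz along its own coordinate with common constant L_max > 0 (i.e. |∂ᵢf(x + t eᵢ) − ∂ᵢf(x)| ≤ L_max·|t| for all x ∈ ℝⁿ, t ∈ ℝ, i ∈ {1,…,n}). Let x* be a global minimizer of f with f* = f(x*). Let (iₖ)ₖ be i.i.d. indices uniformly distributed on {1,…,n} and define the randomized coordinate descent iterates x₀ ∈ ℝⁿ, x_{k+1} = x_k − (1/L_max)·∂_{i_k}f(x_k)·e_{i_k}. Then for every k ≥ 0, the expectation over the random indices satisfies E[f(x_k)] − f* ≤ (1 − σ/(n L_max))ᵏ · (f(x₀) − f*). -/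

import Mathlib

open scoped BigOperators RealInnerProductSpace

/-- The `i`-th partial derivative of `f` at `x`, i.e. `[∇f(x)]ᵢ`. -/
noncomputable def partialDeriv' {n : ℕ} (f : EuclideanSpace ℝ (Fin n) → ℝ)
    (x : EuclideanSpace ℝ (Fin n)) (i : Fin n) : ℝ :=
  fderiv ℝ f x (EuclideanSpace.single i 1)

/-- One coordinate gradient step with step size `1/L` along coordinate `i`:
`x ↦ x − (1/L)·∂ᵢf(x)·eᵢ`. -/
noncomputable def cdStep {n : ℕ} (f : EuclideanSpace ℝ (Fin n) → ℝ) (L : ℝ)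
    (x : EuclideanSpace ℝ (Fin n)) (i : Fin n) : EuclideanSpace ℝ (Fin n) :=
  x - (partialDeriv' f x i / L) • EuclideanSpace.single i 1

/-- The randomized coordinate descent iterates driven by the index sequence `ω`:
`x₀` is given, and `x_{k+1} = x_k − (1/L)·∂_{ω k}f(x_k)·e_{ω k}`. -/
noncomputable def cdIter {n : ℕ} (f : EuclideanSpace ℝ (Fin n) → ℝ) (L : ℝ)
    (x₀ : EuclideanSpace ℝ (Fin n)) (ω : ℕ → Fin n) : ℕ → EuclideanSpace ℝ (Fin n)
  | 0 => x₀
  | k + 1 => cdStep f L (cdIter f L x₀ ω k) (ω k)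

-- gradient pairing
lemma inner_gradient {n : ℕ} (f : EuclideanSpace ℝ (Fin n) → ℝ) (x v : EuclideanSpace ℝ (Fin n)) :
    ⟪gradient f x, v⟫ = fderiv ℝ f x v := by
  simp [gradient, InnerProductSpace.toDual_symm_apply]

lemma line_hasDerivAt {n : ℕ} {f : EuclideanSpace ℝ (Fin n) → ℝ} (hf : Differentiable ℝ f)
    (x v : EuclideanSpace ℝ (Fin n)) (t : ℝ) :
    HasDerivAt (fun s : ℝ => f (x + s • v)) (fderiv ℝ f (x + t • v) v) t := by
  have h1 : HasDerivAt (fun s : ℝ => x + s • v) v t := by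
    simpa using ((hasDerivAt_id t).smul_const v).const_add x
  exact (hf (x + t • v)).hasFDerivAt.comp_hasDerivAt t h1

lemma taylor_upper {n : ℕ} {f : EuclideanSpace ℝ (Fin n) → ℝ} (hf : Differentiable ℝ f)
    {L : ℝ}
    (hLip : ∀ (x : EuclideanSpace ℝ (Fin n)) (t : ℝ) (i : Fin n),
      |partialDeriv' f (x + t • EuclideanSpace.single i 1) i - partialDeriv' f x i| ≤ L * |t|)
    (x : EuclideanSpace ℝ (Fin n)) (i : Fin n) (t : ℝ) :
    f (x + t • EuclideanSpace.single i 1) ≤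
      f x + t * partialDeriv' f x i + L / 2 * t ^ 2 := by
  set e := EuclideanSpace.single i (1:ℝ) with he
  set g := partialDeriv' f x i with hg
  set φ : ℝ → ℝ := fun s => f (x + s • e) - (f x + s * g + L / 2 * s ^ 2) with hφdef
  have hφ : ∀ s, HasDerivAt φ (partialDeriv' f (x + s • e) i - (g + L * s)) s := by
    intro s
    have h1 := line_hasDerivAt hf x e s
    have ha : HasDerivAt (fun s : ℝ => f x + s * g) g s := by
      simpa using ((hasDerivAt_id s).mul_const g).const_add (f x)
    have hb : HasDerivAt (fun s : ℝ => L / 2 * s ^ 2) (L * s) s := by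
      have := (hasDerivAt_pow 2 s).const_mul (L / 2)
      refine this.congr_deriv ?_
      push_cast; ring
    have h2 := ha.add hb
    have := h1.sub h2
    exact this
  have hφ0 : φ 0 = 0 := by simp [hφdef]
  have hdiff : Differentiable ℝ φ := fun s => (hφ s).differentiableAt
  have key : φ t ≤ 0 := by
    rcases le_or_gt 0 t with ht | ht
    · have hanti : AntitoneOn φ (Set.Icc 0 t) := by
        apply antitoneOn_of_deriv_nonpos (convex_Icc 0 t) hdiff.continuous.continuousOn
          hdiff.differentiableOn
        intro s hs
        rw [interior_Icc] at hs
        rw [(hφ s).deriv]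
        have hl := hLip x s i
        rw [abs_of_nonneg hs.1.le] at hl
        have := abs_le.mp hl
        rw [he, hg] at *
        linarith [this.2]
      have := hanti (Set.left_mem_Icc.mpr ht) (Set.right_mem_Icc.mpr ht) ht
      linarith [hφ0 ▸ this]
    · have hmono : MonotoneOn φ (Set.Icc t 0) := by
        apply monotoneOn_of_deriv_nonneg (convex_Icc t 0) hdiff.continuous.continuousOn
          hdiff.differentiableOn
        intro s hs
        rw [interior_Icc] at hs
        rw [(hφ s).deriv]
        have hl := hLip x s i
        rw [abs_of_nonpos hs.2.le] at hl
        have := abs_le.mp hl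
        rw [he, hg] at *
        linarith [this.1]
      have := hmono (Set.left_mem_Icc.mpr ht.le) (Set.right_mem_Icc.mpr ht.le) ht.le
      linarith [hφ0 ▸ this]
  have : f (x + t • e) - (f x + t * g + L / 2 * t ^ 2) ≤ 0 := key
  linarith

lemma cdStep_descent {n : ℕ} {f : EuclideanSpace ℝ (Fin n) → ℝ} (hf : Differentiable ℝ f)
    {L : ℝ} (hL : 0 < L)
    (hLip : ∀ (x : EuclideanSpace ℝ (Fin n)) (t : ℝ) (i : Fin n),
      |partialDeriv' f (x + t • EuclideanSpace.single i 1) i - partialDeriv' f x i| ≤ L * |t|)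
    (x : EuclideanSpace ℝ (Fin n)) (i : Fin n) :
    f (cdStep f L x i) ≤ f x - (partialDeriv' f x i) ^ 2 / (2 * L) := by
  have h := taylor_upper hf hLip x i (-(partialDeriv' f x i / L))
  have hstep : cdStep f L x i = x + (-(partialDeriv' f x i / L)) • EuclideanSpace.single i 1 := by
    simp [cdStep, sub_eq_add_neg, neg_smul]
  rw [hstep]
  have hL' : L ≠ 0 := hL.ne'
  calc f (x + (-(partialDeriv' f x i / L)) • EuclideanSpace.single i 1) ≤
      f x + (-(partialDeriv' f x i / L)) * partialDeriv' f x i +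
        L / 2 * (-(partialDeriv' f x i / L)) ^ 2 := h
    _ = f x - (partialDeriv' f x i) ^ 2 / (2 * L) := by field_simp; ring

lemma grad_coord {n : ℕ} (f : EuclideanSpace ℝ (Fin n) → ℝ) (x : EuclideanSpace ℝ (Fin n))
    (i : Fin n) : gradient f x i = partialDeriv' f x i := by
  have := inner_gradient f x (EuclideanSpace.single i 1)
  rw [real_inner_comm] at this
  rw [partialDeriv', ← this, EuclideanSpace.inner_single_left]
  simp

lemma grad_norm_sq {n : ℕ} (f : EuclideanSpace ℝ (Fin n) → ℝ) (x : EuclideanSpace ℝ (Fin n)) :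
    ‖gradient f x‖ ^ 2 = ∑ i : Fin n, (partialDeriv' f x i) ^ 2 := by
  rw [← real_inner_self_eq_norm_sq]
  rw [PiLp.inner_apply]
  simp_rw [RCLike.inner_apply, conj_trivial, ← grad_coord, sq]

lemma pl_ineq {n : ℕ} {f : EuclideanSpace ℝ (Fin n) → ℝ} {σ : ℝ} (hσ : 0 < σ)
    (hstrong : ∀ x y : EuclideanSpace ℝ (Fin n),
      f x + ⟪gradient f x, y - x⟫ + σ / 2 * ‖y - x‖ ^ 2 ≤ f y)
    (xstar : EuclideanSpace ℝ (Fin n)) (x : EuclideanSpace ℝ (Fin n)) :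
    f x - f xstar ≤ ‖gradient f x‖ ^ 2 / (2 * σ) := by
  have h := hstrong x xstar
  set g := gradient f x
  set z := xstar - x with hz
  have hσ' : σ ≠ 0 := hσ.ne'
  have h1 : σ / 2 * ‖z + (1 / σ) • g‖ ^ 2 =
      σ / 2 * ‖z‖ ^ 2 + ⟪z, g⟫ + ‖g‖ ^ 2 / (2 * σ) := by
    rw [norm_add_sq_real, real_inner_smul_right, norm_smul]
    rw [Real.norm_eq_abs, abs_of_pos (by positivity : (0:ℝ) < 1 / σ)]
    field_simp
  have hkey : (0:ℝ) ≤ σ / 2 * ‖z + (1 / σ) • g‖ ^ 2 := by positivity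
  rw [h1, real_inner_comm g z] at hkey
  linarith

lemma sigma_le_L {n : ℕ} (hn : 0 < n) {f : EuclideanSpace ℝ (Fin n) → ℝ}
    (hf : Differentiable ℝ f) {σ : ℝ}
    (hstrong : ∀ x y : EuclideanSpace ℝ (Fin n),
      f x + ⟪gradient f x, y - x⟫ + σ / 2 * ‖y - x‖ ^ 2 ≤ f y)
    {L : ℝ}
    (hLip : ∀ (x : EuclideanSpace ℝ (Fin n)) (t : ℝ) (i : Fin n),
      |partialDeriv' f (x + t • EuclideanSpace.single i 1) i - partialDeriv' f x i| ≤ L * |t|) :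
    σ ≤ L := by
  set i : Fin n := ⟨0, hn⟩
  set e := EuclideanSpace.single i (1:ℝ) with he
  have hup := taylor_upper hf hLip 0 i 1
  have hlo := hstrong 0 (0 + (1:ℝ) • e)
  have h1 : (0:EuclideanSpace ℝ (Fin n)) + (1:ℝ) • e - 0 = e := by simp
  rw [h1] at hlo
  have h2 : ⟪gradient f 0, e⟫ = partialDeriv' f 0 i := by
    rw [inner_gradient]; rfl
  have h3 : ‖e‖ = 1 := by simp [he]
  rw [h2, h3] at hlo
  have h4 : (0:EuclideanSpace ℝ (Fin n)) + (1:ℝ) • e = 0 + (1:ℝ) • EuclideanSpace.single i 1 := rfl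
  rw [h4] at hlo
  simp only [one_pow] at hlo hup
  linarith

lemma step_sum {n : ℕ} (hn : 0 < n) {f : EuclideanSpace ℝ (Fin n) → ℝ}
    (hf : Differentiable ℝ f) {σ : ℝ} (hσ : 0 < σ)
    (hstrong : ∀ x y : EuclideanSpace ℝ (Fin n),
      f x + ⟪gradient f x, y - x⟫ + σ / 2 * ‖y - x‖ ^ 2 ≤ f y)
    {L : ℝ} (hL : 0 < L)
    (hLip : ∀ (x : EuclideanSpace ℝ (Fin n)) (t : ℝ) (i : Fin n),
      |partialDeriv' f (x + t • EuclideanSpace.single i 1) i - partialDeriv' f x i| ≤ L * |t|)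
    (xstar : EuclideanSpace ℝ (Fin n)) (hmin : ∀ y, f xstar ≤ f y)
    (x : EuclideanSpace ℝ (Fin n)) :
    ∑ i : Fin n, f (cdStep f L x i) ≤
      (n : ℝ) * ((1 - σ / (n * L)) * (f x - f xstar) + f xstar) := by
  have h1 : ∑ i : Fin n, f (cdStep f L x i) ≤
      ∑ i : Fin n, (f x - (partialDeriv' f x i) ^ 2 / (2 * L)) :=
    Finset.sum_le_sum fun i _ => cdStep_descent hf hL hLip x i
  have h2 : ∑ i : Fin n, (f x - (partialDeriv' f x i) ^ 2 / (2 * L)) =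
      (n : ℝ) * f x - ‖gradient f x‖ ^ 2 / (2 * L) := by
    rw [Finset.sum_sub_distrib, Finset.sum_const, Finset.card_univ, Fintype.card_fin,
      grad_norm_sq, Finset.sum_div]
    simp [nsmul_eq_mul]
  have h3 := pl_ineq hσ hstrong xstar x
  have hn' : (0:ℝ) < (n:ℝ) := by exact_mod_cast hn
  have hgoal : (n : ℝ) * ((1 - σ / (n * L)) * (f x - f xstar) + f xstar) =
      (n:ℝ) * f x - (σ / L) * (f x - f xstar) := by
    field_simp
    ring
  rw [hgoal]
  have h4 : σ * (f x - f xstar) ≤ ‖gradient f x‖ ^ 2 / 2 := by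
    rw [le_div_iff₀ (by positivity : (0:ℝ) < 2 * σ)] at h3
    nlinarith
  have h5 : (σ / L) * (f x - f xstar) ≤ ‖gradient f x‖ ^ 2 / (2 * L) := by
    rw [div_mul_eq_mul_div, div_le_div_iff₀ hL (by positivity)]
    nlinarith
  linarith

lemma cdIter_congr {n : ℕ} (f : EuclideanSpace ℝ (Fin n) → ℝ) (L : ℝ)
    (x₀ : EuclideanSpace ℝ (Fin n)) (ω ω' : ℕ → Fin n) (k : ℕ)
    (h : ∀ j < k, ω j = ω' j) : cdIter f L x₀ ω k = cdIter f L x₀ ω' k := by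
  induction k with
  | zero => rfl
  | succ k ih =>
    simp only [cdIter]
    rw [ih fun j hj => h j (hj.trans (Nat.lt_succ_self k)), h k (Nat.lt_succ_self k)]


/-- Randomized coordinate descent on a C², `σ`-strongly convex `f : ℝⁿ → ℝ`
(`σ > 0`) whose partial derivatives are uniformly `L_max`-Lipschitz along their own
coordinates, with global minimizer `x*`, satisfies for every `k ≥ 0`
`E[f(x_k)] − f* ≤ (1 − σ/(n L_max))ᵏ · (f(x₀) − f*)`, where the expectation is the
uniform average over all `n^k` choices of the first `k` coordinate indices. -/
theorem randomized_coordinate_descent_linear_rate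
    {n : ℕ} (hn : 0 < n) (f : EuclideanSpace ℝ (Fin n) → ℝ)
    (hf : ContDiff ℝ 2 f)
    (σ : ℝ) (hσ : 0 < σ)
    (hstrong : ∀ x y : EuclideanSpace ℝ (Fin n),
      f x + ⟪gradient f x, y - x⟫ + σ / 2 * ‖y - x‖ ^ 2 ≤ f y)
    (Lmax : ℝ) (hL : 0 < Lmax)
    (hLip : ∀ (x : EuclideanSpace ℝ (Fin n)) (t : ℝ) (i : Fin n),
      |partialDeriv' f (x + t • EuclideanSpace.single i 1) i - partialDeriv' f x i| ≤
        Lmax * |t|)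
    (xstar : EuclideanSpace ℝ (Fin n)) (hmin : ∀ y, f xstar ≤ f y)
    (x₀ : EuclideanSpace ℝ (Fin n))
    (k : ℕ) :
    ((n : ℝ) ^ k)⁻¹ * (∑ σids : Fin k → Fin n,
        f (cdIter f Lmax x₀ (fun j => if h : j < k then σids ⟨j, h⟩ else ⟨0, hn⟩) k))
      - f xstar ≤ (1 - σ / (n * Lmax)) ^ k * (f x₀ - f xstar) := by
  have hdf : Differentiable ℝ f := hf.differentiable (by norm_num)
  have hσL : σ ≤ Lmax := sigma_le_L hn hdf hstrong hLip
  have hn' : (0:ℝ) < (n:ℝ) := by exact_mod_cast hn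
  set c : ℝ := 1 - σ / (n * Lmax) with hc_def
  have hc : 0 ≤ c := by
    rw [hc_def, sub_nonneg, div_le_one (by positivity)]
    calc σ ≤ Lmax := hσL
      _ ≤ (n:ℝ) * Lmax := le_mul_of_one_le_left hL.le (by exact_mod_cast hn)
  set fs := f xstar with hfs
  induction k with
  | zero => simp [cdIter]
  | succ k ih =>
    set X : (Fin k → Fin n) → EuclideanSpace ℝ (Fin n) := fun s =>
      cdIter f Lmax x₀ (fun j => if h : j < k then s ⟨j, h⟩ else ⟨0, hn⟩) k with hX
    have key : ∀ g : Fin (k+1) → Fin n,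
        cdIter f Lmax x₀ (fun j => if h : j < k+1 then g ⟨j, h⟩ else ⟨0, hn⟩) (k+1)
          = cdStep f Lmax (X (Fin.init g)) (g (Fin.last k)) := by
      intro g
      simp only [cdIter]
      rw [dif_pos (Nat.lt_succ_self k)]
      have h2 : (⟨k, Nat.lt_succ_self k⟩ : Fin (k+1)) = Fin.last k := rfl
      rw [h2]
      have h3 : cdIter f Lmax x₀ (fun j => if h : j < k + 1 then g ⟨j, h⟩ else ⟨0, hn⟩) k
          = X (Fin.init g) := by
        rw [hX]
        apply cdIter_congr
        intro j hj
        rw [dif_pos (hj.trans (Nat.lt_succ_self k)), dif_pos hj]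
        show g _ = g (Fin.castSucc ⟨j, hj⟩)
        congr 1
      rw [h3]
    have hsum : (∑ g : Fin (k+1) → Fin n,
          f (cdIter f Lmax x₀ (fun j => if h : j < k+1 then g ⟨j, h⟩ else ⟨0, hn⟩) (k+1)))
        = ∑ s : Fin k → Fin n, ∑ a : Fin n, f (cdStep f Lmax (X s) a) := by
      rw [← Equiv.sum_comp (Fin.snocEquiv (fun _ => Fin n))
        (fun g => f (cdIter f Lmax x₀ (fun j => if h : j < k+1 then g ⟨j, h⟩ else ⟨0, hn⟩) (k+1)))]
      rw [Fintype.sum_prod_type]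
      rw [Finset.sum_comm]
      apply Finset.sum_congr rfl
      intro s _
      apply Finset.sum_congr rfl
      intro a _
      rw [key]
      simp [Fin.snocEquiv, Fin.init_snoc, Fin.snoc_last]
    rw [hsum]
    have hstep : ∀ s : Fin k → Fin n, ∑ a : Fin n, f (cdStep f Lmax (X s) a) ≤
        (n : ℝ) * (c * (f (X s) - fs) + fs) :=
      fun s => step_sum hn hdf hσ hstrong hL hLip xstar hmin (X s)
    set S := ∑ s : Fin k → Fin n, f (X s) with hS
    have hT : (∑ s : Fin k → Fin n, ∑ a : Fin n, f (cdStep f Lmax (X s) a)) ≤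
        (n:ℝ) * c * S + ((n:ℝ) * fs - (n:ℝ) * c * fs) * (n:ℝ)^k := by
      calc (∑ s : Fin k → Fin n, ∑ a : Fin n, f (cdStep f Lmax (X s) a))
          ≤ ∑ s : Fin k → Fin n, ((n : ℝ) * (c * (f (X s) - fs) + fs)) :=
            Finset.sum_le_sum fun s _ => hstep s
        _ = ∑ s : Fin k → Fin n, ((n:ℝ) * c * f (X s) + ((n:ℝ) * fs - (n:ℝ) * c * fs)) := by
            apply Finset.sum_congr rfl; intro s _; ring
        _ = (n:ℝ) * c * S + ((n:ℝ) * fs - (n:ℝ) * c * fs) * (n:ℝ)^k := by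
            rw [Finset.sum_add_distrib, ← Finset.mul_sum, Finset.sum_const, Finset.card_univ]
            have hcard : Fintype.card (Fin k → Fin n) = n^k := by simp
            rw [hcard, nsmul_eq_mul]
            push_cast
            ring
    have hNk1 : (0:ℝ) < ((n:ℝ)^(k+1))⁻¹ := by positivity
    have h6 : ((n:ℝ)^(k+1))⁻¹ * (∑ s : Fin k → Fin n, ∑ a : Fin n, f (cdStep f Lmax (X s) a))
        - fs ≤ c * (((n:ℝ)^k)⁻¹ * S - fs) := by
      have heq : ((n:ℝ)^(k+1))⁻¹ * ((n:ℝ) * c * S + ((n:ℝ) * fs - (n:ℝ) * c * fs) * (n:ℝ)^k)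
          - fs = c * (((n:ℝ)^k)⁻¹ * S - fs) := by
        field_simp
        ring
      have := mul_le_mul_of_nonneg_left hT hNk1.le
      linarith [this, heq]
    calc ((n:ℝ)^(k+1))⁻¹ * (∑ s : Fin k → Fin n, ∑ a : Fin n, f (cdStep f Lmax (X s) a)) - fs
        ≤ c * (((n:ℝ)^k)⁻¹ * S - fs) := h6
      _ ≤ c * (c^k * (f x₀ - fs)) := mul_le_mul_of_nonneg_left ih hc
      _ = c^(k+1) * (f x₀ - fs) := by ring
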